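/- Let 𝔽_q be a finite field and γ ≠ 0 an element of degree g over 𝔽_q in a finite extension 𝔽_q[γ]. Then for any n×n matrix M with entries in 𝔽_q and any positive integer r, the regular-rigidity satisfies r_M^{𝔽_q}(g·r) ≤ r_M^{𝔽_q[γ]}(r). That is, if M can be written as E + A over 𝔽_q[γ] with E having at most s nonzero entries per row and column and rank(A) ≤ r, then M can be so written over 𝔽_q with sparsity s per row/column and rank at most g·r. -/

import Mathlib

open Matrix

open scoped Classical in
noncomputable def regRigidity {ι : Type*} {F : Type*} [Fintype ι] [Field F]
    (M : Matrix ι ι F) (r : ℕ) : ℕ :=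
  sInf {s : ℕ | ∃ E : Matrix ι ι F,
    (∀ i, (Finset.univ.filter fun j => E i j ≠ 0).card ≤ s) ∧
    (∀ j, (Finset.univ.filter fun i => E i j ≠ 0).card ≤ s) ∧
    (M - E).rank ≤ r}

/-- Applying an `Fq`-linear functional entrywise to a matrix over `K`
multiplies the rank by at most `[K : Fq]`. -/
theorem rank_map_linear_le {Fq K : Type*} [Field Fq] [Field K] [Algebra Fq K]
    [FiniteDimensional Fq K]
    {n : ℕ} (A : Matrix (Fin n) (Fin n) K) (φ : K →ₗ[Fq] Fq) :
    (A.map φ).rank ≤ Module.finrank Fq K * A.rank := by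
  classical
  set p : Submodule K (Fin n → K) := LinearMap.range A.mulVecLin with hp
  set Φ : (Fin n → K) →ₗ[Fq] (Fin n → Fq) :=
    LinearMap.pi (fun i => φ.comp (LinearMap.proj i)) with hΦ
  have hsub : LinearMap.range (A.map φ).mulVecLin ≤
      Submodule.map Φ (p.restrictScalars Fq) := by
    rintro y ⟨x, rfl⟩
    refine ⟨A.mulVec (fun j => algebraMap Fq K (x j)), ⟨_, rfl⟩, ?_⟩
    funext i
    simp only [hΦ, LinearMap.pi_apply, LinearMap.comp_apply, LinearMap.proj_apply,
      Matrix.mulVecLin_apply, Matrix.mulVec, dotProduct, Matrix.map_apply]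
    rw [map_sum]
    congr 1
    funext j
    rw [show A i j * algebraMap Fq K (x j) = x j • A i j by
      rw [Algebra.smul_def, mul_comm], _root_.map_smul]
    simp [mul_comm]
  have h1 : (A.map φ).rank ≤ Module.finrank Fq (Submodule.map Φ (p.restrictScalars Fq)) :=
    Submodule.finrank_mono hsub
  have h2 : Module.finrank Fq (Submodule.map Φ (p.restrictScalars Fq)) ≤
      Module.finrank Fq (p.restrictScalars Fq) := Submodule.finrank_map_le _ _
  have h3 : Module.finrank Fq (p.restrictScalars Fq) = Module.finrank Fq K * Module.finrank K p := by
    have e : Module.finrank Fq (p.restrictScalars Fq) = Module.finrank Fq p :=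
      ((Submodule.restrictScalarsEquiv Fq K _ p).restrictScalars Fq).finrank_eq
    rw [e]
    exact (Module.finrank_mul_finrank Fq K ↥p).symm
  calc (A.map φ).rank ≤ _ := h1
    _ ≤ _ := h2
    _ = _ := h3

/-- Let `𝔽_q` be a finite field and `γ ≠ 0` generate a finite extension
`K = 𝔽_q[γ]` of degree `g`.  For any matrix `M` over `𝔽_q` and positive
integer `r`, `r_M^{𝔽_q}(g·r) ≤ r_M^{𝔽_q[γ]}(r)`. -/
theorem regRigidity_descend_field
    {Fq : Type*} [Field Fq] [Fintype Fq] {K : Type*} [Field K] [Algebra Fq K]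
    [FiniteDimensional Fq K] (γ : K) (hγ : γ ≠ 0)
    (hgen : Algebra.adjoin Fq ({γ} : Set K) = ⊤)
    {n : ℕ} (M : Matrix (Fin n) (Fin n) Fq) (r : ℕ) (hr : 0 < r) :
    regRigidity M (Module.finrank Fq K * r) ≤
      regRigidity (M.map (algebraMap Fq K)) r := by
  classical
  -- an `Fq`-linear left inverse of the algebra map
  obtain ⟨φ, hφ⟩ := (Algebra.linearMap Fq K).exists_leftInverse_of_injective
    (LinearMap.ker_eq_bot.mpr (algebraMap Fq K).injective)
  have hφ' : ∀ c : Fq, φ (algebraMap Fq K c) = c := fun c => by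
    have := LinearMap.congr_fun hφ c
    simpa using this
  unfold regRigidity
  set T := {s : ℕ | ∃ E : Matrix (Fin n) (Fin n) K,
      (∀ i, (Finset.univ.filter fun j => E i j ≠ 0).card ≤ s) ∧
      (∀ j, (Finset.univ.filter fun i => E i j ≠ 0).card ≤ s) ∧
      (M.map (algebraMap Fq K) - E).rank ≤ r} with hT
  set S := {s : ℕ | ∃ E : Matrix (Fin n) (Fin n) Fq,
      (∀ i, (Finset.univ.filter fun j => E i j ≠ 0).card ≤ s) ∧
      (∀ j, (Finset.univ.filter fun i => E i j ≠ 0).card ≤ s) ∧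
      (M - E).rank ≤ Module.finrank Fq K * r} with hS
  have hsubset : T ⊆ S := by
    rintro s ⟨E, hrow, hcol, hrank⟩
    refine ⟨E.map φ, ?_, ?_, ?_⟩
    · intro i
      refine le_trans (Finset.card_le_card ?_) (hrow i)
      intro j hj
      exact Finset.mem_filter.mpr ⟨Finset.mem_univ _, fun h => (Finset.mem_filter.mp hj).2 (by simp [h])⟩
    · intro j
      refine le_trans (Finset.card_le_card ?_) (hcol j)
      intro i hi
      exact Finset.mem_filter.mpr ⟨Finset.mem_univ _, fun h => (Finset.mem_filter.mp hi).2 (by simp [h])⟩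
    · have key : M - E.map φ = (M.map (algebraMap Fq K) - E).map φ := by
        ext i j
        simp [Matrix.map_apply, Matrix.sub_apply, hφ']
      rw [key]
      calc ((M.map (algebraMap Fq K) - E).map φ).rank
          ≤ Module.finrank Fq K * (M.map (algebraMap Fq K) - E).rank :=
            rank_map_linear_le _ φ
        _ ≤ Module.finrank Fq K * r := Nat.mul_le_mul_left _ hrank
  have hTne : T.Nonempty := by
    refine ⟨n, M.map (algebraMap Fq K), ?_, ?_, ?_⟩
    · intro i; exact le_trans (Finset.card_filter_le _ _) (by simp)
    · intro j; exact le_trans (Finset.card_filter_le _ _) (by simp)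
    · simp
  exact Nat.sInf_le (hsubset (Nat.sInf_mem hTne))
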